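/- Let ψ_N: [0,T] → ℂ^N solve i ψ_N'(t) = (H₀ + u(t) H₁) ψ_N(t) with ψ_N(0) = e_1, where H₀ is diagonal Hermitian and H₁ is Hermitian tridiagonal with zero diagonal and off-diagonal entries of absolute value at most c. Then for every p with p + 1 ≤ N and every t ∈ [0,T], |⟨e_{p+1}, ψ_N(t)⟩| ≤ (2c)^p (∫₀ᵗ |u(s)| ds)^p / p!. -/

import Mathlib

open Matrix MeasureTheory intervalIntegral

namespace Stmt12Aux
open Set

lemma fubini_tri (f g : ℝ → ℝ) (t : ℝ) (ht : 0 ≤ t)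
    (hf : IntervalIntegrable f volume 0 t) (hg : IntervalIntegrable g volume 0 t) :
    ∫ s in (0:ℝ)..t, f s * ∫ r in (0:ℝ)..s, g r
      = ∫ r in (0:ℝ)..t, (∫ s in r..t, f s) * g r := by
  set S : Set (ℝ × ℝ) := {q : ℝ × ℝ | q.2 ≤ q.1} with hS
  have hSm : MeasurableSet S := measurableSet_le measurable_snd measurable_fst
  set F : ℝ × ℝ → ℝ := S.indicator (fun q => f q.1 * g q.2) with hF
  have hfI : Integrable f (volume.restrict (Ioc (0:ℝ) t)) := hf.1
  have hgI : Integrable g (volume.restrict (Ioc (0:ℝ) t)) := hg.1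
  have hInt : Integrable (Function.uncurry (fun s r => F (s, r)))
      ((volume.restrict (Ioc (0:ℝ) t)).prod (volume.restrict (Ioc (0:ℝ) t))) := by
    have h0 : Integrable (fun z : ℝ × ℝ => f z.1 * g z.2)
        ((volume.restrict (Ioc (0:ℝ) t)).prod (volume.restrict (Ioc (0:ℝ) t))) :=
      hfI.mul_prod hgI
    exact h0.indicator hSm
  have swap := integral_integral_swap hInt
  have hL : ∫ s in Ioc (0:ℝ) t, (∫ r in Ioc (0:ℝ) t, F (s, r)) =
      ∫ s in Ioc (0:ℝ) t, f s * ∫ r in (0:ℝ)..s, g r := by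
    apply setIntegral_congr_fun measurableSet_Ioc
    intro s hs
    show (∫ r in Ioc (0:ℝ) t, F (s, r)) = f s * ∫ r in (0:ℝ)..s, g r
    have h1 : (fun r => F (s, r)) = (Iic s).indicator (fun r => f s * g r) := by
      funext r
      by_cases h : r ≤ s <;> simp [hF, hS, Set.indicator, h]
    rw [h1, setIntegral_indicator measurableSet_Iic]
    have h2 : Ioc (0:ℝ) t ∩ Iic s = Ioc 0 s := by
      ext r; simp only [mem_inter_iff, mem_Ioc, mem_Iic]
      constructor
      · rintro ⟨⟨h1', _⟩, h3⟩; exact ⟨h1', h3⟩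
      · rintro ⟨h1', h2'⟩; exact ⟨⟨h1', h2'.trans hs.2⟩, h2'⟩
    rw [h2, integral_of_le hs.1.le]; exact MeasureTheory.integral_const_mul _ _
  have hR : ∫ r in Ioc (0:ℝ) t, (∫ s in Ioc (0:ℝ) t, F (s, r)) =
      ∫ r in Ioc (0:ℝ) t, (∫ s in r..t, f s) * g r := by
    apply setIntegral_congr_fun measurableSet_Ioc
    intro r hr
    show (∫ s in Ioc (0:ℝ) t, F (s, r)) = (∫ s in r..t, f s) * g r
    have h1 : (fun s => F (s, r)) = (Ici r).indicator (fun s => f s * g r) := by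
      funext s
      by_cases h : r ≤ s <;> simp [hF, hS, Set.indicator, h]
    rw [h1, setIntegral_indicator measurableSet_Ici]
    have h2 : Ioc (0:ℝ) t ∩ Ici r = Icc r t := by
      ext s; simp only [mem_inter_iff, mem_Ioc, mem_Icc, mem_Ici]
      constructor
      · rintro ⟨⟨_, h3⟩, h4⟩; exact ⟨h4, h3⟩
      · rintro ⟨h3, h4⟩; exact ⟨⟨lt_of_lt_of_le hr.1 h3, h4⟩, h3⟩
    rw [h2, integral_Icc_eq_integral_Ioc, ← integral_of_le hr.2]; exact intervalIntegral.integral_mul_const _ _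
  rw [integral_of_le ht, integral_of_le ht, ← hL, ← hR]
  simpa using swap
lemma keyA (u : ℝ → ℝ) (T : ℝ) (hT : 0 ≤ T) (hu : IntervalIntegrable u volume 0 T) (p : ℕ) :
    ∀ t ∈ Set.Icc (0:ℝ) T,
      (∫ s in (0:ℝ)..t, |u s| * (∫ r in (0:ℝ)..s, |u r|) ^ p)
        = (∫ s in (0:ℝ)..t, |u s|) ^ (p + 1) / (p + 1) := by
  have habs : IntervalIntegrable (fun s => |u s|) volume 0 T := hu.abs
  set F : ℝ → ℝ := fun t => ∫ s in (0:ℝ)..t, |u s| with hFdef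
  have hFc : ContinuousOn F (Icc 0 T) := by
    have := intervalIntegral.continuousOn_primitive_interval' habs left_mem_uIcc
    rwa [uIcc_of_le hT] at this
  have hsub : ∀ t ∈ Icc (0:ℝ) T, IntervalIntegrable (fun s => |u s|) volume 0 t := by
    intro t ht
    exact habs.mono_set (by rw [uIcc_of_le ht.1, uIcc_of_le hT]; exact Icc_subset_Icc le_rfl ht.2)
  have hmix : ∀ q : ℕ, ∀ t ∈ Icc (0:ℝ) T,
      IntervalIntegrable (fun s => |u s| * F s ^ q) volume 0 t := by
    intro q t ht
    apply (hsub t ht).mul_continuousOn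
    apply ContinuousOn.pow
    apply hFc.mono
    rw [uIcc_of_le ht.1]
    exact Icc_subset_Icc le_rfl ht.2
  induction p with
  | zero =>
    intro t ht
    simp [F]
  | succ p ih =>
    intro t ht
    have ht0 : (0:ℝ) ≤ t := ht.1
    -- rewrite integrand using ih
    have step1 : (∫ s in (0:ℝ)..t, |u s| * F s ^ (p + 1))
        = ((p:ℝ) + 1) * ∫ s in (0:ℝ)..t, |u s| * ∫ r in (0:ℝ)..s, |u r| * F r ^ p := by
      rw [← intervalIntegral.integral_const_mul]
      apply intervalIntegral.integral_congr
      intro s hs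
      rw [uIcc_of_le ht0] at hs
      have hsT : s ∈ Icc (0:ℝ) T := ⟨hs.1, hs.2.trans ht.2⟩
      have := ih s hsT
      simp only [F] at this ⊢
      rw [this]
      have hp1 : ((p:ℝ) + 1) ≠ 0 := by positivity
      field_simp
    have step2 : (∫ s in (0:ℝ)..t, |u s| * ∫ r in (0:ℝ)..s, |u r| * F r ^ p)
        = ∫ r in (0:ℝ)..t, (F t - F r) * (|u r| * F r ^ p) := by
      rw [fubini_tri (fun s => |u s|) (fun r => |u r| * F r ^ p) t ht0 (hsub t ht) (hmix p t ht)]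
      apply intervalIntegral.integral_congr
      intro r hr
      rw [uIcc_of_le ht0] at hr
      have h1 : IntervalIntegrable (fun s => |u s|) volume 0 r :=
        hsub r ⟨hr.1, hr.2.trans ht.2⟩
      have h2 : IntervalIntegrable (fun s => |u s|) volume r t := by
        apply habs.mono_set
        rw [uIcc_of_le hr.2, uIcc_of_le hT]
        exact Icc_subset_Icc hr.1 ht.2
      have : (∫ s in r..t, |u s|) = F t - F r := by
        have := intervalIntegral.integral_add_adjacent_intervals h1 h2
        simp only [F]; linarith
      show (∫ s in r..t, |u s|) * (|u r| * F r ^ p) = (F t - F r) * (|u r| * F r ^ p)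
      rw [this]
    have step3 : (∫ r in (0:ℝ)..t, (F t - F r) * (|u r| * F r ^ p))
        = F t * (F t ^ (p+1) / ((p:ℝ)+1)) - ∫ s in (0:ℝ)..t, |u s| * F s ^ (p+1) := by
      have e1 : ∀ r, (F t - F r) * (|u r| * F r ^ p)
          = F t * (|u r| * F r ^ p) - |u r| * F r ^ (p+1) := by
        intro r; ring
      simp only [e1]
      rw [intervalIntegral.integral_sub (((hmix p t ht).const_mul (F t))) (hmix (p+1) t ht),
        intervalIntegral.integral_const_mul]
      have := ih t ht
      simp only [F] at this ⊢
      rw [this]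
    have final := step1
    rw [step2, step3] at final
    have hp1 : ((p:ℝ) + 1) ≠ 0 := by positivity
    have hp2 : ((p:ℝ) + 2) ≠ 0 := by positivity
    have final2 : ((p:ℝ)+2) * (∫ s in (0:ℝ)..t, |u s| * F s ^ (p+1)) = F t ^ (p+2) := by
      field_simp at final
      rw [show F t ^ (p+2) = F t * F t ^ (p+1) from by ring]
      linarith [final]
    show (∫ s in (0:ℝ)..t, |u s| * F s ^ (p+1)) = F t ^ (p+1+1) / (↑(p+1) + 1)
    push_cast
    rw [show (p:ℝ)+1+1 = (p:ℝ)+2 from by ring]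
    rw [show p+1+1 = p+2 from rfl]
    field_simp
    linarith [final2]
lemma herm_dot {N : ℕ} (M : Matrix (Fin N) (Fin N) ℂ) (hM : M.IsHermitian) (v : Fin N → ℂ) :
    star (star v ⬝ᵥ (M *ᵥ v)) = star v ⬝ᵥ (M *ᵥ v) := by
  simp only [dotProduct, mulVec, dotProduct, star_sum, star_mul', Pi.star_apply, star_star,
    Finset.mul_sum, Finset.sum_mul]
  rw [Finset.sum_comm]
  apply Finset.sum_congr rfl
  intro j _
  apply Finset.sum_congr rfl
  intro k _
  rw [hM.apply j k]
  ring

lemma normConsv {N : ℕ} (T : ℝ) (hT : 0 ≤ T) (M : ℝ → Matrix (Fin N) (Fin N) ℂ)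
    (hM : ∀ t, (M t).IsHermitian) (ψ : ℝ → Fin N → ℂ)
    (hψ : ∀ t ∈ Set.Icc (0:ℝ) T, HasDerivAt ψ ((-Complex.I) • (M t *ᵥ ψ t)) t) :
    ∀ t ∈ Set.Icc (0:ℝ) T, ∑ j, Complex.normSq (ψ t j) = ∑ j, Complex.normSq (ψ 0 j) := by
  set S : ℝ → ℝ := fun t => ∑ j, Complex.normSq (ψ t j) with hS
  have hSderiv : ∀ t ∈ Set.Icc (0:ℝ) T, HasDerivAt S 0 t := by
    intro t ht
    have hD : ∀ j : Fin N, HasDerivAt (fun t => ψ t j)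
        (((-Complex.I) • (M t *ᵥ ψ t)) j) t := fun j => (hasDerivAt_pi.mp (hψ t ht)) j
    set D : Fin N → ℂ := (-Complex.I) • (M t *ᵥ ψ t) with hDdef
    have hterm : ∀ j : Fin N, HasDerivAt (fun t => Complex.normSq (ψ t j))
        ((star (D j) * ψ t j + star (ψ t j) * D j).re) t := by
      intro j
      have h1 : HasDerivAt (fun t => star (ψ t j) * ψ t j)
          (star (D j) * ψ t j + star (ψ t j) * D j) t := (hD j).star.mul (hD j)
      have h2 := Complex.reCLM.hasFDerivAt.comp_hasDerivAt t h1
      have h3 : (fun t => Complex.reCLM (star (ψ t j) * ψ t j))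
          = fun t => Complex.normSq (ψ t j) := by
        funext t
        simp [Complex.normSq_eq_conj_mul_self]
        rfl
      rw [← h3]
      exact h2
    have hsum := HasDerivAt.fun_sum (u := Finset.univ)
      (fun j _ => hterm j)
    have hzero : (∑ j : Fin N, (star (D j) * ψ t j + star (ψ t j) * D j).re) = 0 := by
      have e1 : (∑ j : Fin N, (star (D j) * ψ t j + star (ψ t j) * D j).re)
          = (∑ j : Fin N, (star (D j) * ψ t j + star (ψ t j) * D j)).re := by
        rw [Complex.re_sum]
      rw [e1]
      have e2 : (∑ j : Fin N, (star (D j) * ψ t j + star (ψ t j) * D j))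
          = Complex.I * star (star (ψ t) ⬝ᵥ (M t *ᵥ ψ t))
            - Complex.I * (star (ψ t) ⬝ᵥ (M t *ᵥ ψ t)) := by
        simp only [hDdef, dotProduct, star_sum, star_mul', Pi.star_apply, star_star,
          Finset.mul_sum, Pi.smul_apply, smul_eq_mul]
        rw [← Finset.sum_sub_distrib]
        apply Finset.sum_congr rfl
        intro j _
        simp only [star_mul', star_neg, Complex.star_def, Complex.conj_I, star_star]
        ring_nf
      rw [e2, herm_dot (M t) (hM t) (ψ t), sub_self]
      simp
    rw [← hzero]
    exact hsum
  intro t ht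
  have hcont : ContinuousOn S (Icc 0 T) := fun s hs => ((hSderiv s hs).continuousAt).continuousWithinAt
  have := constant_of_has_deriv_right_zero hcont (fun s hs =>
    ((hSderiv s ⟨hs.1, hs.2.le⟩).hasDerivWithinAt)) t ht
  simpa [hS] using this

end Stmt12Aux


open Stmt12Aux in
/-- Population bound for a driven tridiagonal system: if `ψ_N` solves
`i ψ_N' = (H₀ + u(t) H₁) ψ_N` starting from `e₁`, with `H₀` diagonal Hermitian and
`H₁` Hermitian tridiagonal with zero diagonal and off-diagonal entries bounded by `c`,
then `|⟨e_{p+1}, ψ_N(t)⟩| ≤ (2c)^p (∫₀ᵗ |u|)^p / p!`. -/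
theorem stmt12 (N : ℕ) (hN : 0 < N) (T c : ℝ) (hc : 0 ≤ c) (hT : 0 ≤ T)
    (H₀ H₁ : Matrix (Fin N) (Fin N) ℂ)
    (hH₀diag : H₀.IsDiag) (hH₀herm : H₀.IsHermitian) (hH₁herm : H₁.IsHermitian)
    (hH₁tri : ∀ i j : Fin N, (i : ℕ) + 1 ≠ (j : ℕ) → (j : ℕ) + 1 ≠ (i : ℕ) → H₁ i j = 0)
    (hH₁bd : ∀ i j : Fin N, (i : ℕ) + 1 = (j : ℕ) → ‖H₁ i j‖ ≤ c)
    (u : ℝ → ℝ) (hu : IntervalIntegrable u volume 0 T)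
    (ψ : ℝ → (Fin N → ℂ))
    (hψ0 : ψ 0 = Pi.single (⟨0, hN⟩ : Fin N) 1)
    (hψ : ∀ t ∈ Set.Icc 0 T,
      HasDerivAt ψ ((-Complex.I) • ((H₀ + (u t : ℂ) • H₁) *ᵥ ψ t)) t) :
    ∀ t ∈ Set.Icc 0 T, ∀ p : ℕ, ∀ hp : p + 1 ≤ N,
      ‖ψ t ⟨p, hp⟩‖ ≤ (2 * c) ^ p * (∫ s in (0:ℝ)..t, |u s|) ^ p / (p.factorial : ℝ) := by
  set F : ℝ → ℝ := fun t => ∫ s in (0:ℝ)..t, |u s| with hF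
  have habs : IntervalIntegrable (fun s => |u s|) volume 0 T := hu.abs
  have hsub : ∀ t ∈ Set.Icc (0:ℝ) T, IntervalIntegrable (fun s => |u s|) volume 0 t := by
    intro t ht
    exact habs.mono_set
      (by rw [Set.uIcc_of_le ht.1, Set.uIcc_of_le hT]; exact Set.Icc_subset_Icc le_rfl ht.2)
  have hFc : ContinuousOn F (Set.Icc 0 T) := by
    have := intervalIntegral.continuousOn_primitive_interval' habs Set.left_mem_uIcc
    rwa [Set.uIcc_of_le hT] at this
  have hFnn : ∀ t ∈ Set.Icc (0:ℝ) T, 0 ≤ F t := fun t ht =>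
    intervalIntegral.integral_nonneg ht.1 (fun _ _ => abs_nonneg _)
  -- Hermitian at each time
  have hMherm : ∀ t : ℝ, (H₀ + (u t : ℂ) • H₁).IsHermitian := by
    intro t
    apply hH₀herm.add
    unfold Matrix.IsHermitian
    rw [conjTranspose_smul, hH₁herm.eq]
    norm_num [Complex.star_def, Complex.conj_ofReal]
  -- norm conservation
  have hnorm := normConsv T hT (fun t => H₀ + (u t : ℂ) • H₁) hMherm ψ hψ
  have hψ0norm : ∑ j, Complex.normSq (ψ 0 j) = 1 := by
    rw [hψ0]
    simp [Pi.single_apply, apply_ite Complex.normSq]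
  have hbound1 : ∀ t ∈ Set.Icc (0:ℝ) T, ∀ j : Fin N, ‖ψ t j‖ ≤ 1 := by
    intro t ht j
    have h2 : Complex.normSq (ψ t j) ≤ 1 := by
      have h3 := Finset.single_le_sum (f := fun k => Complex.normSq (ψ t k))
        (fun k _ => Complex.normSq_nonneg _) (Finset.mem_univ j)
      rw [hnorm t ht, hψ0norm] at h3
      exact h3
    have h4 : ‖ψ t j‖ ^ 2 ≤ 1 := by
      rw [Complex.sq_norm]
      exact h2
    nlinarith [norm_nonneg (ψ t j)]
  -- continuity of ψ
  have hψc : ContinuousOn ψ (Set.Icc 0 T) := fun s hs =>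
    (hψ s hs).continuousAt.continuousWithinAt
  have hψcj : ∀ j : Fin N, ContinuousOn (fun s => ψ s j) (Set.Icc 0 T) := fun j =>
    (continuous_apply j).comp_continuousOn hψc
  -- main induction
  have main : ∀ p : ℕ, ∀ t ∈ Set.Icc (0:ℝ) T, ∀ j : Fin N, p ≤ (j : ℕ) →
      ‖ψ t j‖ ≤ (2 * c) ^ p * (F t) ^ p / (p.factorial : ℝ) := by
    intro p
    induction p with
    | zero => intro t ht j _; simpa using hbound1 t ht j
    | succ p ih =>
      intro t ht j hj
      have ht0 : (0:ℝ) ≤ t := ht.1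
      obtain ⟨lam, hlam⟩ : ∃ lam : ℝ, H₀ j j = (lam : ℂ) := by
        have h5 := hH₀herm.apply j j
        exact ⟨(H₀ j j).re, ((Complex.conj_eq_iff_re).mp h5).symm⟩
      set w : ℝ → ℂ := fun s => (H₁ *ᵥ ψ s) j with hw
      set g : ℝ → ℂ := fun s => Complex.exp (Complex.I * lam * s) * ψ s j with hg
      set G : ℝ → ℂ := fun s =>
        Complex.exp (Complex.I * lam * s) * (-Complex.I * (u s : ℂ) * w s) with hG
      have hwc : ContinuousOn w (Set.Icc 0 T) := by
        have hwe : w = fun s => ∑ k, H₁ j k * ψ s k := by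
          funext s; simp [hw, Matrix.mulVec, dotProduct]
        rw [hwe]
        apply continuousOn_finset_sum
        intro k _
        exact continuousOn_const.mul (hψcj k)
      have hgderiv : ∀ s ∈ Set.Icc (0:ℝ) T, HasDerivAt g (G s) s := by
        intro s hs
        have h1 : HasDerivAt (fun r : ℝ => (r : ℂ)) 1 s := by
          simpa using (hasDerivAt_id s).ofReal_comp
        have h2 : HasDerivAt (fun r : ℝ => Complex.I * (lam : ℂ) * (r : ℂ))
            (Complex.I * (lam : ℂ)) s := by
          simpa using h1.const_mul (Complex.I * (lam : ℂ))
        have h3 := h2.cexp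
        have h4 := (hasDerivAt_pi.mp (hψ s hs)) j
        have h5 := h3.mul h4
        have hdiag : (H₀ *ᵥ ψ s) j = (lam : ℂ) * ψ s j := by
          simp only [Matrix.mulVec, dotProduct]
          rw [Finset.sum_eq_single j]
          · rw [hlam]
          · intro k _ hk
            rw [hH₀diag (Ne.symm hk), zero_mul]
          · intro h; exact absurd (Finset.mem_univ j) h
        have hDj : ((-Complex.I) • ((H₀ + (u s : ℂ) • H₁) *ᵥ ψ s)) j
            = -Complex.I * ((lam : ℂ) * ψ s j + (u s : ℂ) * w s) := by
          simp only [Pi.smul_apply, smul_eq_mul, Matrix.add_mulVec, Matrix.smul_mulVec,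
            Pi.add_apply, hdiag, hw]
        rw [hDj] at h5
        have heq : Complex.exp (Complex.I * (lam : ℂ) * s) * (Complex.I * (lam : ℂ)) * ψ s j
            + Complex.exp (Complex.I * (lam : ℂ) * s)
              * (-Complex.I * ((lam : ℂ) * ψ s j + (u s : ℂ) * w s)) = G s := by
          simp only [hG]; ring
        rw [heq] at h5
        exact h5
      have hGint : IntervalIntegrable G volume 0 t := by
        have h0 := hu.mono_set
          (by rw [Set.uIcc_of_le ht0, Set.uIcc_of_le hT] ; exact Set.Icc_subset_Icc le_rfl ht.2)
        have huC : IntervalIntegrable (fun s => (u s : ℂ)) volume 0 t := ⟨h0.1.ofReal, h0.2.ofReal⟩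
        have hcont : ContinuousOn (fun s : ℝ => Complex.exp (Complex.I * (lam : ℂ) * s)
            * -Complex.I * w s) (Set.uIcc 0 t) := by
          rw [Set.uIcc_of_le ht0]
          apply ContinuousOn.mul
          · apply Continuous.continuousOn
            exact (Complex.continuous_exp.comp (by continuity)).mul continuous_const
          · exact hwc.mono (Set.Icc_subset_Icc le_rfl ht.2)
        have h1 := huC.mul_continuousOn hcont
        have hfun : G = fun s => (u s : ℂ)
            * (Complex.exp (Complex.I * (lam : ℂ) * s) * -Complex.I * w s) := by
          funext s; simp only [hG]; ring
        rw [hfun]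
        exact h1
      have hg0 : g 0 = 0 := by
        have hj0 : j ≠ (⟨0, hN⟩ : Fin N) := by
          intro hjj
          rw [hjj] at hj
          simp at hj
        simp [hg, hψ0, Pi.single_eq_of_ne hj0]
      have hftc : ∫ s in (0:ℝ)..t, G s = g t := by
        rw [← sub_zero (g t), ← hg0]
        apply intervalIntegral.integral_eq_sub_of_hasDerivAt
        · intro s hs
          rw [Set.uIcc_of_le ht0] at hs
          exact hgderiv s ⟨hs.1, hs.2.trans ht.2⟩
        · exact hGint
      have hexp1 : ∀ s : ℝ, ‖Complex.exp (Complex.I * (lam : ℂ) * s)‖ = 1 := by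
        intro s
        rw [Complex.norm_exp]
        simp
      have hnormg : ‖ψ t j‖ = ‖g t‖ := by
        simp only [hg, norm_mul, hexp1, one_mul]
      have hwbd : ∀ s ∈ Set.Icc (0:ℝ) t, ‖w s‖
          ≤ 2 * c * ((2 * c) ^ p * F s ^ p / (p.factorial : ℝ)) := by
        intro s hs
        have hsT : s ∈ Set.Icc (0:ℝ) T := ⟨hs.1, hs.2.trans ht.2⟩
        have hFs : 0 ≤ F s := hFnn s hsT
        set B : ℝ := (2 * c) ^ p * F s ^ p / (p.factorial : ℝ) with hB
        have hBnn : 0 ≤ B := by positivity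
        have hw1 : w s = ∑ k, H₁ j k * ψ s k := by
          simp [hw, Matrix.mulVec, dotProduct]
        have hterm : ∀ k : Fin N, ‖H₁ j k * ψ s k‖
            ≤ if ((k:ℕ) + 1 = (j:ℕ) ∨ (j:ℕ) + 1 = (k:ℕ)) then c * B else 0 := by
          intro k
          by_cases hcond : ((k:ℕ) + 1 = (j:ℕ) ∨ (j:ℕ) + 1 = (k:ℕ))
          · rw [if_pos hcond, norm_mul]
            have hk : p ≤ (k:ℕ) := by rcases hcond with h | h <;> omega
            have h1 : ‖H₁ j k‖ ≤ c := by
              rcases hcond with h | h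
              · calc ‖H₁ j k‖ = ‖star (H₁ k j)‖ := by rw [hH₁herm.apply j k]
                  _ = ‖H₁ k j‖ := norm_star _
                  _ ≤ c := hH₁bd k j h
              · exact hH₁bd j k h
            exact mul_le_mul h1 (ih s hsT k hk) (norm_nonneg _) hc
          · rw [if_neg hcond]
            push_neg at hcond
            rw [hH₁tri j k hcond.2 hcond.1]
            simp
        have hcard : (Finset.univ.filter
            (fun k : Fin N => (k:ℕ) + 1 = (j:ℕ) ∨ (j:ℕ) + 1 = (k:ℕ))).card ≤ 2 := by
          have hsubset : (Finset.univ.filter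
              (fun k : Fin N => (k:ℕ) + 1 = (j:ℕ) ∨ (j:ℕ) + 1 = (k:ℕ))).card
              ≤ ({(j:ℕ) - 1, (j:ℕ) + 1} : Finset ℕ).card := by
            apply Finset.card_le_card_of_injOn (fun k : Fin N => (k:ℕ))
            · intro k hk
              simp only [Finset.coe_filter, Finset.mem_coe, Finset.mem_filter, Finset.mem_univ, true_and, Set.mem_setOf_eq] at hk
              rw [Finset.mem_coe, Finset.mem_insert, Finset.mem_singleton]
              beta_reduce
              omega
            · intro a _ b _ hab
              exact Fin.val_injective hab
          refine hsubset.trans ?_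
          exact (Finset.card_insert_le _ _).trans (by simp)
        calc ‖w s‖ = ‖∑ k, H₁ j k * ψ s k‖ := by rw [hw1]
          _ ≤ ∑ k, ‖H₁ j k * ψ s k‖ := norm_sum_le _ _
          _ ≤ ∑ k : Fin N, (if ((k:ℕ) + 1 = (j:ℕ) ∨ (j:ℕ) + 1 = (k:ℕ)) then c * B else 0) :=
              Finset.sum_le_sum (fun k _ => hterm k)
          _ = ∑ k ∈ Finset.univ.filter
                (fun k : Fin N => (k:ℕ) + 1 = (j:ℕ) ∨ (j:ℕ) + 1 = (k:ℕ)), c * B :=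
              (Finset.sum_filter _ _).symm
          _ = (Finset.univ.filter
                (fun k : Fin N => (k:ℕ) + 1 = (j:ℕ) ∨ (j:ℕ) + 1 = (k:ℕ))).card • (c * B) :=
              Finset.sum_const _
          _ ≤ 2 * (c * B) := by
              rw [nsmul_eq_mul]
              have : 0 ≤ c * B := mul_nonneg hc hBnn
              have h2 : ((Finset.univ.filter
                  (fun k : Fin N => (k:ℕ) + 1 = (j:ℕ) ∨ (j:ℕ) + 1 = (k:ℕ))).card : ℝ) ≤ 2 := by
                exact_mod_cast hcard
              exact mul_le_mul_of_nonneg_right h2 this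
          _ = 2 * c * B := by ring
      have hGbd : ∀ s ∈ Set.Icc (0:ℝ) t, ‖G s‖
          ≤ ((2 * c) ^ (p + 1) / (p.factorial : ℝ)) * (|u s| * F s ^ p) := by
        intro s hs
        have h6 := hwbd s hs
        have h7 : ‖G s‖ = |u s| * ‖w s‖ := by
          simp only [hG, norm_mul, hexp1, one_mul, norm_neg, Complex.norm_I, Complex.norm_real]
          rw [Real.norm_eq_abs]
        rw [h7]
        have h8 : |u s| * ‖w s‖ ≤ |u s| * (2 * c * ((2 * c) ^ p * F s ^ p / (p.factorial : ℝ))) :=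
          mul_le_mul_of_nonneg_left h6 (abs_nonneg _)
        refine h8.trans (le_of_eq ?_)
        rw [pow_succ]
        ring
      have hInt2 : IntervalIntegrable
          (fun s => ((2 * c) ^ (p + 1) / (p.factorial : ℝ)) * (|u s| * F s ^ p)) volume 0 t := by
        apply IntervalIntegrable.const_mul
        apply (hsub t ht).mul_continuousOn
        apply ContinuousOn.pow
        apply hFc.mono
        rw [Set.uIcc_of_le ht0]
        exact Set.Icc_subset_Icc le_rfl ht.2
      have hle : ‖ψ t j‖ ≤ ((2 * c) ^ (p + 1) / (p.factorial : ℝ)) * (F t ^ (p + 1) / ((p:ℝ) + 1)) := by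
        rw [hnormg, ← hftc]
        calc ‖∫ s in (0:ℝ)..t, G s‖ ≤ ∫ s in (0:ℝ)..t, ‖G s‖ :=
              intervalIntegral.norm_integral_le_integral_norm ht0
          _ ≤ ∫ s in (0:ℝ)..t, ((2 * c) ^ (p + 1) / (p.factorial : ℝ)) * (|u s| * F s ^ p) :=
              intervalIntegral.integral_mono_on ht0 hGint.norm hInt2 hGbd
          _ = ((2 * c) ^ (p + 1) / (p.factorial : ℝ)) * ∫ s in (0:ℝ)..t, |u s| * F s ^ p :=
              intervalIntegral.integral_const_mul _ _
          _ = ((2 * c) ^ (p + 1) / (p.factorial : ℝ)) * (F t ^ (p + 1) / ((p:ℝ) + 1)) := by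
              rw [keyA u T hT hu p t ht]
      refine hle.trans (le_of_eq ?_)
      rw [Nat.factorial_succ]
      push_cast
      rw [div_mul_div_comm, mul_comm ((p.factorial : ℝ))]
  intro t ht p hp
  exact main p t ht ⟨p, hp⟩ le_rfl
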